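/- Every connected finite graph G on n vertices with minimum degree δ(G) ≥ 2 satisfies diam(G) ≤ ⌊3n/(δ(G)+1)⌋ − 1. -/

import Mathlib

private lemma exists_walk_to_getVert {V : Type*} {G : SimpleGraph V} {u v : V}
    (p : G.Walk u v) (i : ℕ) : ∃ r : G.Walk u (p.getVert i), r.length ≤ i := by
  induction p generalizing i with
  | nil => exact ⟨SimpleGraph.Walk.nil, by simp [SimpleGraph.Walk.getVert]⟩
  | @cons a b c h q ih =>
    cases i with
    | zero => exact ⟨SimpleGraph.Walk.nil, by exact Nat.le_refl 0⟩
    | succ i =>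
      obtain ⟨r, hr⟩ := ih i
      exact ⟨SimpleGraph.Walk.cons h r, by simpa using Nat.succ_le_succ hr⟩

private lemma dist_getVert_le' {V : Type*} {G : SimpleGraph V} {u v : V}
    (p : G.Walk u v) (i : ℕ) : G.dist u (p.getVert i) ≤ i := by
  obtain ⟨r, hr⟩ := exists_walk_to_getVert p i
  exact le_trans (SimpleGraph.dist_le r) hr

/-- Erdős–Pach–Pollack–Tuza: every connected graph on `n` vertices with minimum degree
`δ ≥ 2` has diameter at most `⌊3n/(δ+1)⌋ − 1`: every two vertices are at distance at
most `3n/(δ+1) − 1`. -/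
theorem diameter_le_of_minDegree {V : Type*} [Fintype V]
    (G : SimpleGraph V) (hconn : G.Connected) (n δ : ℕ)
    (hn : Fintype.card V = n) (hδ2 : 2 ≤ δ)
    (hδ : ∀ w, δ ≤ (G.neighborSet w).ncard) :
    ∀ u v, G.dist u v ≤ 3 * n / (δ + 1) - 1 := by
  classical
  intro u v
  set d := G.dist u v with hd
  obtain ⟨p, hp⟩ := hconn.exists_walk_length_eq_dist u v
  -- distance from u to the i-th vertep.getVert (3 * i)s at most i
  have hxu : ∀ i, G.dist u (p.getVert i) ≤ i := fun i => dist_getVert_le' p i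
  -- distance from the i-th vertex to v is at most d - i
  have hxv : ∀ i, i ≤ d → G.dist (p.getVert i) v ≤ d - i := by
    intro i hi
    have h := dist_getVert_le' p.reverse (d - i)
    rw [SimpleGraph.Walk.getVert_reverse] at h
    have hplen : p.length = d := hp
    have : p.length - (d - i) = i := by omega
    rw [this] at h
    rwa [SimpleGraph.dist_comm]
  -- vertices along a geodesic are at distance exactly the index difference
  have key : ∀ a b, a ≤ b → b ≤ d → b - a ≤ G.dist (p.getVert a) (p.getVert b) := by
    intro a b hab hbd
    have h1 := hxu a
    have h2 := hxv b hbd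
    have t1 : G.dist u v ≤ G.dist u (p.getVert a) + G.dist (p.getVert a) v :=
      hconn.dist_triangle
    have t2 : G.dist (p.getVert a) v ≤
        G.dist (p.getVert a) (p.getVert b) + G.dist (p.getVert b) v :=
      hconn.dist_triangle
    omega
  -- the closed neighborhoods of every third vertex on the geodesic
  set k := d / 3 + 1 with hk
  set S : ℕ → Finset V := fun j => insert (p.getVert (3 * j)) (G.neighborFinset (p.getVert (3 * j))) with hS
  have hScard : ∀ j, δ + 1 ≤ (S j).card := by
    intro j
    have hnot : p.getVert (3 * j) ∉ G.neighborFinset (p.getVert (3 * j)) := by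
      simp [SimpleGraph.neighborFinset]
    rw [hS]
    rw [Finset.card_insert_of_notMem hnot]
    have hdeg : δ ≤ (G.neighborFinset (p.getVert (3 * j))).card := by
      have := hδ (p.getVert (3 * j))
      rwa [Set.ncard_eq_toFinset_card' (G.neighborSet (p.getVert (3 * j)))] at this
    omega
  -- each member of S j is at distance ≤ 1 from p.getVert (3 * j)
  have hmem_dist : ∀ j w, w ∈ S j → G.dist (p.getVert (3 * j)) w ≤ 1 := by
    intro j w hw
    rw [hS] at hw
    simp only [Finset.mem_insert, SimpleGraph.mem_neighborFinset] at hw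
    rcases hw with rfl | hadj
    · rw [SimpleGraph.dist_self]
      omega
    · exact le_of_eq (SimpleGraph.dist_eq_one_iff_adj.mpr hadj)
  -- the S j for j < k are pairwise disjoint
  have hdisj : ∀ i ∈ Finset.range k, ∀ j ∈ Finset.range k, i ≠ j →
      Disjoint (S i) (S j) := by
    intro i hi j hj hij
    rw [Finset.disjoint_left]
    intro w hwi hwj
    wlog hlt : i < j generalizing i j
    · exact this j hj i hi hij.symm hwj hwi (by omega)
    have h3i : 3 * i ≤ 3 * j := by omega
    have h3j : 3 * j ≤ d := by
      simp only [Finset.mem_range, hk] at hj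
      omega
    have hge := key (3 * i) (3 * j) h3i h3j
    have hle : G.dist (p.getVert (3 * i)) (p.getVert (3 * j)) ≤ 2 := by
      have t1 : G.dist (p.getVert (3 * i)) (p.getVert (3 * j)) ≤ G.dist (p.getVert (3 * i)) w + G.dist w (p.getVert (3 * j)) :=
        hconn.dist_triangle
      have d1 := hmem_dist i w hwi
      have d2 := hmem_dist j w hwj
      rw [SimpleGraph.dist_comm] at d2
      omega
    omega
  -- counting
  have hcount : k * (δ + 1) ≤ n := by
    have hsub : (Finset.range k).biUnion S ⊆ Finset.univ := Finset.subset_univ _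
    have hcard := Finset.card_biUnion hdisj
    have hsum : k * (δ + 1) ≤ ∑ j ∈ Finset.range k, (S j).card := by
      calc k * (δ + 1) = ∑ _j ∈ Finset.range k, (δ + 1) := by
            simp [mul_comm]
        _ ≤ ∑ j ∈ Finset.range k, (S j).card :=
            Finset.sum_le_sum fun j _ => hScard j
    calc k * (δ + 1) ≤ ((Finset.range k).biUnion S).card := by rw [hcard]; exact hsum
      _ ≤ Fintype.card V := Finset.card_le_univ _
      _ = n := hn
  -- final arithmetic
  have h3k : 3 * k ≤ 3 * n / (δ + 1) := by
    rw [Nat.le_div_iff_mul_le (by omega : 0 < δ + 1)]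
    calc 3 * k * (δ + 1) = 3 * (k * (δ + 1)) := by ring
      _ ≤ 3 * n := by omega
  have hdk : d ≤ 3 * k - 1 := by
    rw [hk]
    omega
  omega
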